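/- arXiv:1808.06091 — 4 statements merged into one kernel-verified Lean document; each statement's English description precedes it below -/
import Mathlib

section
/- Let T be a planar or toric trinity and T0 a planar trinity, and form the connected sum T#T0 by gluing T0 into a chosen black triangle of T. Then the states of T#T0 are in natural bijection with pairs (s, s') where s is a state of T and s' is a state of T0; moreover there is a clockwise move from (s, s') to (t, t') if and only if either s' = t' and there is a clockwise move from s to t in T, or s = t and there is a clockwise move from s' to t' in T0. In particular, the state transition graph of T#T0 is the product of the state transition graphs of T and T0. -/
/-!  Combinatorial trinities, Tutte matchings (states), and clock moves,
following Hine and Kálmán, "Clock theorems for triangulated surfaces".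

A trinity is encoded combinatorially: `Vertex` is the set of vertices, properly
colored by `vcol` with colors `Fin 3` (0 = red, 1 = green, 2 = blue); `White`
and `Black` are the sets of white and black triangles.  Each triangle has one
vertex of each color (`wvert`, `bvert`) and one edge of each color (the edge of
color `c` being opposite the vertex of color `c`); across its edge of color `c`
a white triangle `w` meets the black triangle `wadj w c`, and a black triangle
`b` meets the white triangle `badj b c`.  The two triangles sharing an edge of
color `c` share their vertices of the other two colors (`bvert_wadj`).
A planar trinity carries a distinguished outer white triangle (`outer = some o`);
for a toric trinity `outer = none`. -/

structure Trinity where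
  Vertex : Type
  White : Type
  Black : Type
  [vertexFintype : Fintype Vertex]
  [whiteFintype : Fintype White]
  [blackFintype : Fintype Black]
  [vertexDecEq : DecidableEq Vertex]
  [whiteDecEq : DecidableEq White]
  [blackDecEq : DecidableEq Black]
  outer : Option White
  vcol : Vertex → Fin 3
  wvert : White → Fin 3 → Vertex
  bvert : Black → Fin 3 → Vertex
  wadj : White → Fin 3 → Black
  badj : Black → Fin 3 → White
  wvert_col : ∀ w c, vcol (wvert w c) = c
  bvert_col : ∀ b c, vcol (bvert b c) = c
  badj_wadj : ∀ w c, badj (wadj w c) c = w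
  wadj_badj : ∀ b c, wadj (badj b c) c = b
  bvert_wadj : ∀ w c c', c' ≠ c → bvert (wadj w c) c' = wvert w c'

attribute [instance] Trinity.vertexFintype Trinity.whiteFintype Trinity.blackFintype
  Trinity.vertexDecEq Trinity.whiteDecEq Trinity.blackDecEq

namespace Trinity

variable (T : Trinity)

/-- `w` is the outer white triangle. -/
def IsOuter (w : T.White) : Prop := T.outer = some w

instance : DecidablePred T.IsOuter := fun w => decidable_of_iff (T.outer = some w) Iff.rfl

/-- `v` is a root, i.e. a vertex of the outer white triangle (planar case). -/
def IsRoot (v : T.Vertex) : Prop := ∃ w, T.IsOuter w ∧ ∃ c, v = T.wvert w c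

/-- A Tutte matching (state): a perfect matching between the non-outer white
triangles and incident non-root vertices.  (For a toric trinity, `IsOuter` and
`IsRoot` are empty conditions, so this is a perfect matching between all white
triangles and all vertices.)  The value on the outer white triangle, if any, is
irrelevant and is normalized by `outer_spec`. -/
structure State where
  toFun : T.White → T.Vertex
  incident : ∀ w, ∃ c, toFun w = T.wvert w c
  injOn : ∀ w w', ¬ T.IsOuter w → ¬ T.IsOuter w' → toFun w = toFun w' → w = w'
  not_root : ∀ w, ¬ T.IsOuter w → ¬ T.IsRoot (toFun w)
  surj : ∀ v, ¬ T.IsRoot v → ∃ w, ¬ T.IsOuter w ∧ toFun w = v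
  outer_spec : ∀ w, T.IsOuter w → toFun w = T.wvert w 0

namespace State

variable {T}

/-- The black triangle through which the arrow representing the match of the
white triangle `w` passes: the arrow of the match `(w, s w)` crosses the edge
of `w` opposite the matched vertex `s w` (the edge of color `vcol (s w)`). -/
def arrowBlack (s : T.State) (w : T.White) : T.Black := T.wadj w (T.vcol (s.toFun w))

/-- The black triangle `b` is empty in the state `s`: no arrow passes through it. -/
def EmptyAt (s : T.State) (b : T.Black) : Prop :=
  ∀ w, ¬ T.IsOuter w → s.arrowBlack w ≠ b

/-- `b` is a clockwise empty black triangle of `s`:  it is empty and its three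
vertices are matched with the three adjacent white triangles in the clockwise
rotational pattern. -/
def IsCW (s : T.State) (b : T.Black) : Prop :=
  s.EmptyAt b ∧ ∀ c, s.toFun (T.badj b c) = T.bvert b (c + 1)

/-- `b` is a counter-clockwise empty black triangle of `s`. -/
def IsCCW (s : T.State) (b : T.Black) : Prop :=
  s.EmptyAt b ∧ ∀ c, s.toFun (T.badj b c) = T.bvert b (c + 2)

end State

/-- The basic clockwise move (clock move) about the empty black triangle `b`,
turning it from clockwise to counter-clockwise: `t` is obtained from `s` by
changing `b`. -/
def CWMoveAt (s t : T.State) (b : T.Black) : Prop :=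
  s.IsCW b ∧ (∀ c, t.toFun (T.badj b c) = T.bvert b (c + 2)) ∧
    ∀ w, (∀ c, w ≠ T.badj b c) → t.toFun w = s.toFun w

/-- A walk in the state transition graph, recording for each step the black
triangle about which the move is performed and the direction of the move
(`true` = clockwise, `false` = counter-clockwise). -/
inductive Walk : T.State → List (T.Black × Bool) → T.State → Prop
  | nil (s : T.State) : Walk s [] s
  | cw {s t u : T.State} {b : T.Black} {l : List (T.Black × Bool)} :
      T.CWMoveAt s t b → Walk t l u → Walk s ((b, true) :: l) u
  | ccw {s t u : T.State} {b : T.Black} {l : List (T.Black × Bool)} :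
      T.CWMoveAt t s b → Walk t l u → Walk s ((b, false) :: l) u

/-- Two states lie in the same connected component of the state transition
graph. -/
def Reaches (s t : T.State) : Prop := ∃ l, T.Walk s l t

/-- A walk consisting of clockwise moves only, about the listed black triangles. -/
def CWWalk (s : T.State) (l : List T.Black) (t : T.State) : Prop :=
  T.Walk s (l.map fun b => (b, true)) t

/-- A state is recurrent if some non-empty sequence of clockwise moves starts
and ends at it. -/
def Recurrent (s : T.State) : Prop := ∃ l : List T.Black, l ≠ [] ∧ T.CWWalk s l s

/-- `s` belongs to an acyclic component of the state transition graph: no state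
in its component is recurrent. -/
def InAcyclic (s : T.State) : Prop := ∀ t, T.Reaches s t → ¬ T.Recurrent t

/-- Two white triangles sharing an adjacent black triangle. -/
def WAdj (w w' : T.White) : Prop := ∃ c c', T.wadj w c = T.wadj w' c'

/-- Rotation (by one step, in the direction induced by the orientation) of the
white triangles around the vertex `v`. -/
def rotAt (v : T.Vertex) (w : T.White) : T.White :=
  T.badj (T.wadj w (T.vcol v + 1)) (T.vcol v + 2)

/-- The combinatorial data encode a closed connected oriented surface: the
triangles form a connected complex and the link of every vertex is a single
cycle of triangles. -/
def Surface : Prop :=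
  (∀ w w' : T.White, Relation.ReflTransGen T.WAdj w w') ∧
  ∀ (v : T.Vertex) (w w' : T.White), T.wvert w (T.vcol v) = v → T.wvert w' (T.vcol v) = v →
    ∃ k : ℕ, (T.rotAt v)^[k] w = w'

/-- A planar trinity: a trinity on the sphere (Euler characteristic 2) with a
distinguished outer white triangle. -/
def Planar : Prop :=
  T.Surface ∧ T.outer.isSome ∧ Fintype.card T.Vertex = Fintype.card T.White + 2

/-- A toric trinity: a trinity on the torus (Euler characteristic 0), with all
triangles and vertices taking part in matchings. -/
def Toric : Prop :=
  T.Surface ∧ T.outer = none ∧ Fintype.card T.Vertex = Fintype.card T.White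

/-- The configuration of a general clock move: three white triangles `W 0, W 1,
W 2` and three vertices `u 0, u 1, u 2` (one of each color) such that `W c`
contains the vertices `u c'` for both colors `c' ≠ c`; the three edges of
colors `c` of the triangles `W c` then form a closed triangle of edges through
the vertices `u`, bounding a disk on the side opposite to the whites.
(For the boundary of a black triangle `b` this recovers `W = T.badj b`,
`u = T.bvert b`.) -/
def CombConfig (W : Fin 3 → T.White) (u : Fin 3 → T.Vertex) : Prop :=
  ∀ c c' : Fin 3, c' ≠ c → T.wvert (W c) c' = u c'

/-- A general clockwise move from `s` to `t`: about some clock-move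
configuration whose three (non-outer) white triangles are matched with its
three vertices, the matching is switched from the clockwise pattern to the
counter-clockwise one, all other matches being kept. -/
def CWMove (s t : T.State) : Prop :=
  ∃ (W : Fin 3 → T.White) (u : Fin 3 → T.Vertex),
    T.CombConfig W u ∧ (∀ c, ¬ T.IsOuter (W c)) ∧
    (∀ c, s.toFun (W c) = u (c + 1)) ∧ (∀ c, t.toFun (W c) = u (c + 2)) ∧
    ∀ w, (∀ c, w ≠ W c) → t.toFun w = s.toFun w

/-- `P` exhibits the closed triangle of edges determined by the clock-move
configuration `W` as separating: `P` is a two-coloring of the triangles which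
changes value exactly across the three edges of the configuration, the white
triangles `W c` being on the `P`-side. -/
def ConfigCut (W : Fin 3 → T.White) (P : T.White ⊕ T.Black → Prop) : Prop :=
  (∀ (w : T.White) (c : Fin 3), (∀ c₀, ¬ (w = W c₀ ∧ c = c₀)) →
    (P (Sum.inl w) ↔ P (Sum.inr (T.wadj w c)))) ∧
  (∀ c, P (Sum.inl (W c))) ∧ (∀ c, ¬ P (Sum.inr (T.wadj (W c) c)))

/-- A trinity is irreducible if it is not the trinity `F` with a single black
and a single white triangle, and it is not a nontrivial connected sum; i.e.
every separating closed triangle of edges cuts off a single triangle. -/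
def Irreducible : Prop :=
  1 < Fintype.card T.White ∧
  ∀ (W : Fin 3 → T.White) (u : Fin 3 → T.Vertex) (P : T.White ⊕ T.Black → Prop),
    T.CombConfig W u → T.ConfigCut W P →
      (∃ b : T.Black, ∀ x, ¬ P x ↔ x = Sum.inr b) ∨
      (∃ w : T.White, ∀ x, P x ↔ x = Sum.inl w)

/-! ### The directed dual graphs `G_X^*`

For a color `X`, the vertices of the directed graph `G_X^*` are the vertices of
the trinity of color `X` and its directed edges are in natural bijection with
the white triangles: the white triangle `w` corresponds to the dual edge of its
edge of color `X`, directed from the vertex of color `X` of the adjacent black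
triangle `wadj w X` (its tail) to the vertex of color `X` of `w` (its head).
The arrows of a state pointing to vertices of color `X` are edges of `G_X^*`. -/

/-- The head of the edge of `G_X^*` corresponding to the white triangle `w`. -/
def head (X : Fin 3) (w : T.White) : T.Vertex := T.wvert w X

/-- The tail of the edge of `G_X^*` corresponding to the white triangle `w`. -/
def tail (X : Fin 3) (w : T.White) : T.Vertex := T.bvert (T.wadj w X) X

/-- One-step reachability in `G_X^*` along edges from the set `A`. -/
def ARel (X : Fin 3) (A : Finset T.White) (a b : T.Vertex) : Prop :=
  ∃ w ∈ A, T.tail X w = a ∧ T.head X w = b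

/-- `A` is a spanning arborescence of `G_X^*`, rooted at the root of color `X`
(the vertex of color `X` of the outer triangle `o`): a spanning tree all of
whose edges point away from the root. -/
def IsArborescence (X : Fin 3) (o : T.White) (A : Finset T.White) : Prop :=
  (∀ w ∈ A, T.head X w ≠ T.wvert o X) ∧
  (∀ v : T.Vertex, T.vcol v = X → v ≠ T.wvert o X → ∃! w, w ∈ A ∧ T.head X w = v) ∧
  (∀ v : T.Vertex, T.vcol v = X → Relation.ReflTransGen (T.ARel X A) (T.wvert o X) v)

/-- One step of the tour tracing (counter-clockwise) the boundary of a small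
neighborhood of the spanning tree `A` in `G_X^*`.  A position of the tour is a
dart `(w, d)`: the edge `w` of `G_X^*` together with a direction (`true`:
towards the head, `false`: towards the tail).  From the end of the dart one
rotates to the next edge-end around the vertex; if that edge belongs to `A` it
is traversed away from the vertex, and otherwise its end is crossed (recorded
by bouncing back towards the vertex). -/
def tourStep (X : Fin 3) (A : Finset T.White) : T.White × Bool → T.White × Bool :=
  fun p =>
    if p.2 then
      let w' := T.badj (T.wadj p.1 (X + 1)) X
      (w', decide (w' ∈ A))
    else
      let w' := T.badj (T.wadj p.1 X) (X + 2)
      (w', decide (w' ∉ A))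

/-- The position of the edge `w` of `G_X^*` in the ordering `<_A` determined by
the spanning arborescence `A`: the first time the boundary tour of a
neighborhood of `A` (started on the outer white triangle `o`, i.e. at the dart
arriving at the root through `o`) travels along `w` (if `w ∈ A`) or crosses an
end of `w` (if `w ∉ A`). -/
noncomputable def ordIdx (X : Fin 3) (o : T.White) (A : Finset T.White) (w : T.White) : ℕ :=
  sInf {k : ℕ | ((T.tourStep X A)^[k] (o, true)).1 = w}

/-- `A` is the clocked arborescence of `G_X^*`: the spanning arborescence such
that for every non-root vertex `y` of color `X`, the edge of `A` pointing to
`y` is smallest, with respect to the ordering `<_A`, among all edges of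
`G_X^*` terminating at `y`. -/
def IsClocked (X : Fin 3) (o : T.White) (A : Finset T.White) : Prop :=
  T.IsArborescence X o A ∧
    ∀ w ∈ A, ∀ w' : T.White, w' ≠ w → T.head X w' = T.head X w →
      T.ordIdx X o A w < T.ordIdx X o A w'

/-! ### Wreaths (toric trinities) -/

/-- A nonempty set `C` of edges of `G_R^*` forming a single (directed) cycle:
at every red vertex the in-degree and out-degree in `C` agree and are at most
one, and `C` is connected. -/
def IsDirCycle (C : Finset T.White) : Prop :=
  C.Nonempty ∧
  (∀ v : T.Vertex, T.vcol v = 0 →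
    (C.filter fun w => T.head 0 w = v).card = (C.filter fun w => T.tail 0 w = v).card ∧
    (C.filter fun w => T.head 0 w = v).card ≤ 1) ∧
  ∀ w ∈ C, ∀ w' ∈ C,
    Relation.ReflTransGen (fun a b => a ∈ C ∧ b ∈ C ∧ T.head 0 a = T.tail 0 b) w w'

/-- The cycle `C` of edges of `G_R^*` separates the surface: the faces of
`G_R^*` (which correspond to the green and blue vertices of the trinity) can be
two-colored so that the two faces adjacent along an edge of `G_R^*` (namely the
faces of the green and the blue endpoint of the crossed red edge) get the same
color exactly when the edge does not belong to `C`. -/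
def SeparatingSet (C : Finset T.White) : Prop :=
  ∃ P : T.Vertex → Prop,
    (∀ w : T.White, w ∉ C → (P (T.wvert w 1) ↔ P (T.wvert w 2))) ∧
    ∀ w ∈ C, ¬ (P (T.wvert w 1) ↔ P (T.wvert w 2))

/-- A wreath: a set `W` of edges of the directed dual graph `G_R^*` such that
every red vertex has exactly one edge of `W` pointing to it and the edges of
`W` form no separating cycle. -/
def IsWreath (W : Finset T.White) : Prop :=
  (∀ v : T.Vertex, T.vcol v = 0 → ∃! w, w ∈ W ∧ T.head 0 w = v) ∧
  ∀ C ⊆ W, T.IsDirCycle C → ¬ T.SeparatingSet C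

end Trinity

theorem Trinity.State.ext' {T : Trinity} {s t : T.State}
    (h : ∀ w, s.toFun w = t.toFun w) : s = t := by
  have h' : s.toFun = t.toFun := funext h
  cases s; cases t
  cases h'
  rfl

open Trinity in

/-- Theorem 2.4.  Let `T` be a planar or toric trinity, `T0` a
planar trinity with outer triangle `o0`, and let `S` be the connected sum
`T#T0` obtained by gluing `T0` minus its outer triangle into the black triangle
`b0` of `T` (the gluing being encoded by the bijections `eW`, `eV` and the
boundary identification `θ`, which sends the roots of `T0` to the corresponding
vertices of `b0`).  Then the states of `S` are in natural bijection with pairs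
of states of `T` and `T0`, and the clockwise moves of `S` correspond exactly to
clockwise moves performed in either factor.  In particular, the state
transition graph of `T#T0` is the product of those of `T` and `T0`. -/
theorem connectedSum_states_and_moves (T T0 S : Trinity)
    (hT : T.Planar ∨ T.Toric) (hT0 : T0.Planar)
    (b0 : T.Black) (o0 : T0.White) (ho0 : T0.outer = some o0)
    (eW : T.White ⊕ {w : T0.White // w ≠ o0} ≃ S.White)
    (eV : T.Vertex ⊕ {v : T0.Vertex // ¬ T0.IsRoot v} ≃ S.Vertex)
    (θ : T0.Vertex → S.Vertex)
    (hSouter : S.outer = T.outer.map fun w => eW (Sum.inl w))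
    (hθroot : ∀ c : Fin 3, θ (T0.wvert o0 c) = eV (Sum.inl (T.bvert b0 c)))
    (hθ : ∀ (v : T0.Vertex) (h : ¬ T0.IsRoot v), θ v = eV (Sum.inr ⟨v, h⟩))
    (hcolT : ∀ v : T.Vertex, S.vcol (eV (Sum.inl v)) = T.vcol v)
    (hcol0 : ∀ v : T0.Vertex, S.vcol (θ v) = T0.vcol v)
    (hwT : ∀ (w : T.White) (c : Fin 3),
      S.wvert (eW (Sum.inl w)) c = eV (Sum.inl (T.wvert w c)))
    (hw0 : ∀ (w : T0.White) (h : w ≠ o0) (c : Fin 3),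
      S.wvert (eW (Sum.inr ⟨w, h⟩)) c = θ (T0.wvert w c)) :
    ∃ Φ : S.State ≃ T.State × T0.State,
      (∀ (σ : S.State) (w : T.White),
        σ.toFun (eW (Sum.inl w)) = eV (Sum.inl ((Φ σ).1.toFun w))) ∧
      (∀ (σ : S.State) (w : T0.White) (h : w ≠ o0),
        σ.toFun (eW (Sum.inr ⟨w, h⟩)) = θ ((Φ σ).2.toFun w)) ∧
      (∀ σ τ : S.State, S.CWMove σ τ ↔
        (((Φ σ).2 = (Φ τ).2 ∧ T.CWMove (Φ σ).1 (Φ τ).1) ∨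
         ((Φ σ).1 = (Φ τ).1 ∧ T0.CWMove (Φ σ).2 (Φ τ).2))) := by
  
  classical
  -- Fin 3 arithmetic facts
  have fin3A : ∀ c : Fin 3, c ≠ c + 1 := by decide
  have fin3C : ∀ c : Fin 3, c + 1 ≠ c + 2 := by decide
  have fin3E : ∀ c : Fin 3, c + 2 ≠ c := by decide
  have fin3G : ∀ c : Fin 3, c + 2 + 1 = c := by decide
  have fin3H : ∀ c : Fin 3, c + 1 + 1 = c + 2 := by decide
  -- outer/root characterizations
  have hOuter0 : ∀ w : T0.White, T0.IsOuter w ↔ w = o0 := by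
    intro w
    simp only [Trinity.IsOuter, ho0, Option.some.injEq, eq_comm]
  have hIsOuterO0 : T0.IsOuter o0 := (hOuter0 o0).mpr rfl
  have hNOuter0 : ∀ w : T0.White, w ≠ o0 → ¬ T0.IsOuter w :=
    fun w h ho => h ((hOuter0 w).mp ho)
  have hRoot0 : ∀ v : T0.Vertex, T0.IsRoot v ↔ ∃ c, v = T0.wvert o0 c := by
    intro v
    constructor
    · rintro ⟨w, hw, c, hv⟩
      rw [(hOuter0 w).mp hw] at hv
      exact ⟨c, hv⟩
    · rintro ⟨c, rfl⟩
      exact ⟨o0, hIsOuterO0, c, rfl⟩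
  have hOuterS_inl : ∀ w : T.White, S.IsOuter (eW (Sum.inl w)) ↔ T.IsOuter w := by
    intro w
    cases hTo : T.outer with
    | none => simp [Trinity.IsOuter, hSouter, hTo]
    | some ow =>
      simp only [Trinity.IsOuter, hSouter, hTo, Option.map_some, Option.some.injEq,
        eW.injective.eq_iff, Sum.inl.injEq]
  have hOuterS_inr : ∀ p : {w : T0.White // w ≠ o0}, ¬ S.IsOuter (eW (Sum.inr p)) := by
    intro p h
    rw [Trinity.IsOuter, hSouter] at h
    cases hTo : T.outer with
    | none => rw [hTo] at h; simp at h
    | some ow =>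
      rw [hTo] at h
      simp only [Option.map_some, Option.some.injEq] at h
      exact absurd (eW.injective h) (by simp)
  have hRootS : ∀ v : S.Vertex,
      S.IsRoot v ↔ ∃ w c, T.IsOuter w ∧ v = eV (Sum.inl (T.wvert w c)) := by
    intro v
    constructor
    · rintro ⟨wS, hwS, c, hv⟩
      rw [Trinity.IsOuter, hSouter] at hwS
      rcases hTo : T.outer with _ | ow
      · rw [hTo] at hwS; simp at hwS
      · rw [hTo] at hwS
        simp only [Option.map_some, Option.some.injEq] at hwS
        refine ⟨ow, c, hTo, ?_⟩
        rw [hv, ← hwS, hwT]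
    · rintro ⟨w, c, hw, rfl⟩
      exact ⟨eW (Sum.inl w), (hOuterS_inl w).mpr hw, c, (hwT w c).symm⟩
  have θinj : Function.Injective θ := by
    intro v v' hvv
    by_cases h1 : T0.IsRoot v <;> by_cases h2 : T0.IsRoot v'
    · obtain ⟨c, rfl⟩ := (hRoot0 v).mp h1
      obtain ⟨c', rfl⟩ := (hRoot0 v').mp h2
      rw [hθroot, hθroot] at hvv
      have hb : T.bvert b0 c = T.bvert b0 c' := by simpa using eV.injective hvv
      have h3 := T.bvert_col b0 c
      rw [hb, T.bvert_col] at h3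
      rw [h3]
    · obtain ⟨c, rfl⟩ := (hRoot0 v).mp h1
      rw [hθroot, hθ v' h2] at hvv
      exact absurd (eV.injective hvv) (by simp)
    · obtain ⟨c, rfl⟩ := (hRoot0 v').mp h2
      rw [hθ v h1, hθroot] at hvv
      exact absurd (eV.injective hvv) (by simp)
    · rw [hθ v h1, hθ v' h2] at hvv
      simpa using eV.injective hvv
  have hw0' : ∀ (p : {w : T0.White // w ≠ o0}) (c : Fin 3),
      S.wvert (eW (Sum.inr p)) c = θ (T0.wvert p.1 c) := fun p c => hw0 p.1 p.2 c
  -- cardinalities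
  have hcardW : Fintype.card {w : T0.White // w ≠ o0} = Fintype.card T0.White - 1 := by
    rw [Fintype.card_subtype_compl, Fintype.card_subtype_eq]
  have hroots : Fintype.card {v : T0.Vertex // T0.IsRoot v} = 3 := by
    have hbij : Function.Bijective (fun c : Fin 3 =>
        (⟨T0.wvert o0 c, (hRoot0 _).mpr ⟨c, rfl⟩⟩ : {v : T0.Vertex // T0.IsRoot v})) := by
      constructor
      · intro c c' hcc
        have := congrArg (fun x : {v : T0.Vertex // T0.IsRoot v} => T0.vcol x.1) hcc
        simpa [T0.wvert_col] using this
      · rintro ⟨v, hv⟩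
        obtain ⟨c, rfl⟩ := (hRoot0 v).mp hv
        exact ⟨c, rfl⟩
    have := Fintype.card_of_bijective hbij
    simpa using this.symm
  have hcardV : Fintype.card {v : T0.Vertex // ¬ T0.IsRoot v} = Fintype.card T0.White - 1 := by
    rw [Fintype.card_subtype_compl, hroots, hT0.2.2]
    omega
  -- values of states on the two parts
  have hValInl : ∀ (σ : S.State) (w : T.White), ∃ v : T.Vertex,
      σ.toFun (eW (Sum.inl w)) = eV (Sum.inl v) ∧ ∃ c, v = T.wvert w c := by
    intro σ w
    obtain ⟨c, hc⟩ := σ.incident (eW (Sum.inl w))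
    exact ⟨T.wvert w c, by rw [hc, hwT], c, rfl⟩
  have hValInr : ∀ (σ : S.State) (p : {w : T0.White // w ≠ o0}), ∃ v : T0.Vertex,
      σ.toFun (eW (Sum.inr p)) = θ v ∧ ∃ c, v = T0.wvert p.1 c := by
    intro σ p
    obtain ⟨c, hc⟩ := σ.incident (eW (Sum.inr p))
    refine ⟨T0.wvert p.1 c, ?_, c, rfl⟩
    rw [hc, hw0' p c]
  have hcount2 : ∀ (σ : S.State) (x : {v : T0.Vertex // ¬ T0.IsRoot v}),
      ∃ p : {w : T0.White // w ≠ o0}, σ.toFun (eW (Sum.inr p)) = eV (Sum.inr x) := by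
    intro σ x
    have hnr : ¬ S.IsRoot (eV (Sum.inr x)) := by
      rw [hRootS]
      rintro ⟨w, c, -, heq⟩
      exact absurd (eV.injective heq) (by simp)
    obtain ⟨wS, hwS, hval⟩ := σ.surj _ hnr
    rcases hx : eW.symm wS with w1 | p
    · exfalso
      have hW : wS = eW (Sum.inl w1) := by rw [← hx, Equiv.apply_symm_apply]
      obtain ⟨v, hv, -⟩ := hValInl σ w1
      rw [hW, hv] at hval
      exact absurd (eV.injective hval) (by simp)
    · have hW : wS = eW (Sum.inr p) := by rw [← hx, Equiv.apply_symm_apply]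
      exact ⟨p, by rw [← hW, hval]⟩
  have hcount : ∀ (σ : S.State) (p : {w : T0.White // w ≠ o0}),
      ∃ x : {v : T0.Vertex // ¬ T0.IsRoot v}, σ.toFun (eW (Sum.inr p)) = eV (Sum.inr x) := by
    intro σ p
    set f : {w : T0.White // w ≠ o0} → S.Vertex := fun q => σ.toFun (eW (Sum.inr q)) with hfdef
    have hfinj : Function.Injective f := by
      intro q q' hqq
      have h1 := σ.injOn _ _ (hOuterS_inr q) (hOuterS_inr q') hqq
      simpa using eW.injective h1
    set g : {v : T0.Vertex // ¬ T0.IsRoot v} → S.Vertex := fun x => eV (Sum.inr x) with hgdef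
    have hginj : Function.Injective g := fun x y hxy => Sum.inr.inj (eV.injective hxy)
    have hsub : Finset.univ.image g ⊆ Finset.univ.image f := by
      intro v hv
      simp only [Finset.mem_image, Finset.mem_univ, true_and] at hv ⊢
      obtain ⟨x, rfl⟩ := hv
      obtain ⟨q, hq⟩ := hcount2 σ x
      exact ⟨q, hq⟩
    have hFcard : (Finset.univ.image f).card = Fintype.card T0.White - 1 := by
      rw [Finset.card_image_of_injective _ hfinj, Finset.card_univ, hcardW]
    have hGcard : (Finset.univ.image g).card = Fintype.card T0.White - 1 := by
      rw [Finset.card_image_of_injective _ hginj, Finset.card_univ, hcardV]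
    have hFG : Finset.univ.image g = Finset.univ.image f :=
      Finset.eq_of_subset_of_card_le hsub (by rw [hFcard, hGcard])
    have hmem : f p ∈ Finset.univ.image g := by
      rw [hFG]
      exact Finset.mem_image_of_mem f (Finset.mem_univ p)
    simp only [Finset.mem_image, Finset.mem_univ, true_and] at hmem
    obtain ⟨x, hx⟩ := hmem
    exact ⟨x, hx.symm⟩
  -- the T-component of a state of S
  have mkT : ∀ σ : S.State, ∃ s : T.State,
      ∀ w, σ.toFun (eW (Sum.inl w)) = eV (Sum.inl (s.toFun w)) := by
    intro σ
    choose sf hsf hsc using hValInl σ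
    refine ⟨⟨sf, hsc, ?_, ?_, ?_, ?_⟩, hsf⟩
    · intro w w' hw hw' heq
      have h1 : σ.toFun (eW (Sum.inl w)) = σ.toFun (eW (Sum.inl w')) := by
        rw [hsf, hsf, heq]
      have h2 := σ.injOn _ _ (fun h => hw ((hOuterS_inl w).mp h))
        (fun h => hw' ((hOuterS_inl w').mp h)) h1
      simpa using eW.injective h2
    · intro w hw hroot
      obtain ⟨wo, hwo, c, hvc⟩ := hroot
      refine σ.not_root (eW (Sum.inl w)) (fun h => hw ((hOuterS_inl w).mp h)) ?_
      rw [hRootS]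
      exact ⟨wo, c, hwo, by rw [hsf, hvc]⟩
    · intro v hv
      have hnr : ¬ S.IsRoot (eV (Sum.inl v)) := by
        rw [hRootS]
        rintro ⟨wo, c, hwo, heq⟩
        exact hv ⟨wo, hwo, c, by simpa using eV.injective heq⟩
      obtain ⟨wS, hwS, hval⟩ := σ.surj _ hnr
      rcases hx : eW.symm wS with w1 | p
      · have hW : wS = eW (Sum.inl w1) := by rw [← hx, Equiv.apply_symm_apply]
        refine ⟨w1, fun h => hwS (by rw [hW]; exact (hOuterS_inl w1).mpr h), ?_⟩
        rw [hW, hsf] at hval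
        simpa using eV.injective hval
      · exfalso
        have hW : wS = eW (Sum.inr p) := by rw [← hx, Equiv.apply_symm_apply]
        obtain ⟨x, hx2⟩ := hcount σ p
        rw [hW, hx2] at hval
        exact absurd (eV.injective hval) (by simp)
    · intro w hw
      have h1 := σ.outer_spec (eW (Sum.inl w)) ((hOuterS_inl w).mpr hw)
      rw [hsf, hwT] at h1
      simpa using eV.injective h1
  -- the T0-component of a state of S
  have mkT0 : ∀ σ : S.State, ∃ s' : T0.State, ∀ (w : T0.White) (h : w ≠ o0),
      σ.toFun (eW (Sum.inr ⟨w, h⟩)) = θ (s'.toFun w) := by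
    intro σ
    choose s'f hs'f hs'c using hValInr σ
    refine ⟨⟨fun w => if h : w = o0 then T0.wvert o0 0 else s'f ⟨w, h⟩, ?_, ?_, ?_, ?_, ?_⟩, ?_⟩
    · intro w
      by_cases h : w = o0
      · subst h; exact ⟨0, by rw [dif_pos rfl]⟩
      · refine ⟨(hs'c ⟨w, h⟩).choose, ?_⟩
        dsimp only
        rw [dif_neg h]
        exact (hs'c ⟨w, h⟩).choose_spec
    · intro w w' hw hw' heq
      have h : w ≠ o0 := fun e => hw ((hOuter0 w).mpr e)
      have h' : w' ≠ o0 := fun e => hw' ((hOuter0 w').mpr e)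
      rw [dif_neg h, dif_neg h'] at heq
      have h1 : σ.toFun (eW (Sum.inr ⟨w, h⟩)) = σ.toFun (eW (Sum.inr ⟨w', h'⟩)) := by
        rw [hs'f, hs'f, heq]
      have h2 := eW.injective (σ.injOn _ _ (hOuterS_inr _) (hOuterS_inr _) h1)
      simpa using h2
    · intro w hw hroot
      have h : w ≠ o0 := fun e => hw ((hOuter0 w).mpr e)
      rw [dif_neg h] at hroot
      obtain ⟨x, hx⟩ := hcount σ ⟨w, h⟩
      obtain ⟨c, hc⟩ := (hRoot0 _).mp hroot
      have h1 := hs'f ⟨w, h⟩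
      rw [hx, hc, hθroot] at h1
      exact absurd (eV.injective h1) (by simp)
    · intro v hv
      obtain ⟨p, hp⟩ := hcount2 σ ⟨v, hv⟩
      refine ⟨p.1, hNOuter0 p.1 p.2, ?_⟩
      rw [dif_neg p.2]
      apply θinj
      show θ (s'f p) = θ v
      rw [← hs'f p, hp, hθ v hv]
    · intro w hw
      rw [(hOuter0 w).mp hw]
      rw [dif_pos rfl]
    · intro w h
      dsimp only
      rw [dif_neg h]
      exact hs'f ⟨w, h⟩
  -- the state of S determined by a pair of states
  have mkInv : ∀ (s : T.State) (s' : T0.State), ∃ σ : S.State,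
      (∀ w, σ.toFun (eW (Sum.inl w)) = eV (Sum.inl (s.toFun w))) ∧
      ∀ (w : T0.White) (h : w ≠ o0), σ.toFun (eW (Sum.inr ⟨w, h⟩)) = θ (s'.toFun w) := by
    intro s s'
    have keyfun : ∃ f : S.White → S.Vertex,
        (∀ w, f (eW (Sum.inl w)) = eV (Sum.inl (s.toFun w))) ∧
        ∀ p : {w : T0.White // w ≠ o0}, f (eW (Sum.inr p)) = θ (s'.toFun p.1) := by
      refine ⟨fun wS => Sum.rec (fun w => eV (Sum.inl (s.toFun w)))
        (fun p => θ (s'.toFun p.1)) (eW.symm wS), fun w => ?_, fun p => ?_⟩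
      · dsimp only
        rw [Equiv.symm_apply_apply]
      · dsimp only
        rw [Equiv.symm_apply_apply]
    obtain ⟨f, kf1, kf2⟩ := keyfun
    refine ⟨⟨f, ?_, ?_, ?_, ?_, ?_⟩, kf1, fun w h => kf2 ⟨w, h⟩⟩
    · intro wS
      rcases hx : eW.symm wS with w | p
      · obtain rfl : wS = eW (Sum.inl w) := by rw [← hx, Equiv.apply_symm_apply]
        obtain ⟨c, hc⟩ := s.incident w
        exact ⟨c, by rw [kf1, hc, hwT]⟩
      · obtain rfl : wS = eW (Sum.inr p) := by rw [← hx, Equiv.apply_symm_apply]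
        obtain ⟨c, hc⟩ := s'.incident p.1
        refine ⟨c, ?_⟩
        rw [kf2, hc, hw0' p c]
    · intro wS wS' h1 h2 heq
      rcases hx : eW.symm wS with w | p <;> rcases hx' : eW.symm wS' with w' | p'
      · obtain rfl : wS = eW (Sum.inl w) := by rw [← hx, Equiv.apply_symm_apply]
        obtain rfl : wS' = eW (Sum.inl w') := by rw [← hx', Equiv.apply_symm_apply]
        rw [kf1, kf1] at heq
        have h3 := s.injOn w w' (fun h => h1 ((hOuterS_inl w).mpr h))
          (fun h => h2 ((hOuterS_inl w').mpr h)) (by simpa using eV.injective heq)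
        rw [h3]
      · obtain rfl : wS = eW (Sum.inl w) := by rw [← hx, Equiv.apply_symm_apply]
        obtain rfl : wS' = eW (Sum.inr p') := by rw [← hx', Equiv.apply_symm_apply]
        exfalso
        rw [kf1, kf2] at heq
        have hnr := s'.not_root p'.1 (hNOuter0 p'.1 p'.2)
        rw [hθ _ hnr] at heq
        exact absurd (eV.injective heq) (by simp)
      · obtain rfl : wS = eW (Sum.inr p) := by rw [← hx, Equiv.apply_symm_apply]
        obtain rfl : wS' = eW (Sum.inl w') := by rw [← hx', Equiv.apply_symm_apply]
        exfalso
        rw [kf2, kf1] at heq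
        have hnr := s'.not_root p.1 (hNOuter0 p.1 p.2)
        rw [hθ _ hnr] at heq
        exact absurd (eV.injective heq) (by simp)
      · obtain rfl : wS = eW (Sum.inr p) := by rw [← hx, Equiv.apply_symm_apply]
        obtain rfl : wS' = eW (Sum.inr p') := by rw [← hx', Equiv.apply_symm_apply]
        rw [kf2, kf2] at heq
        have h3 := s'.injOn p.1 p'.1 (hNOuter0 _ p.2) (hNOuter0 _ p'.2) (θinj heq)
        rw [show p = p' from Subtype.ext h3]
    · intro wS h1 hroot
      rw [hRootS] at hroot
      obtain ⟨wo, c, hwo, heq⟩ := hroot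
      rcases hx : eW.symm wS with w | p
      · obtain rfl : wS = eW (Sum.inl w) := by rw [← hx, Equiv.apply_symm_apply]
        rw [kf1] at heq
        exact s.not_root w (fun h => h1 ((hOuterS_inl w).mpr h))
          ⟨wo, hwo, c, by simpa using eV.injective heq⟩
      · obtain rfl : wS = eW (Sum.inr p) := by rw [← hx, Equiv.apply_symm_apply]
        rw [kf2] at heq
        have hnr := s'.not_root p.1 (hNOuter0 p.1 p.2)
        rw [hθ _ hnr] at heq
        exact absurd (eV.injective heq) (by simp)
    · intro v hv
      rcases hx : eV.symm v with u | x
      · obtain rfl : v = eV (Sum.inl u) := by rw [← hx, Equiv.apply_symm_apply]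
        have hu : ¬ T.IsRoot u := by
          rintro ⟨wo, hwo, c, rfl⟩
          exact hv ((hRootS _).mpr ⟨wo, c, hwo, rfl⟩)
        obtain ⟨w, hw, hsw⟩ := s.surj u hu
        refine ⟨eW (Sum.inl w), fun h => hw ((hOuterS_inl w).mp h), ?_⟩
        rw [kf1, hsw]
      · obtain rfl : v = eV (Sum.inr x) := by rw [← hx, Equiv.apply_symm_apply]
        obtain ⟨w, hw, hsw⟩ := s'.surj x.1 x.2
        have hne : w ≠ o0 := fun e => hw ((hOuter0 w).mpr e)
        refine ⟨eW (Sum.inr ⟨w, hne⟩), hOuterS_inr _, ?_⟩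
        rw [kf2, hsw, hθ x.1 x.2]
    · intro wS hwS
      rw [Trinity.IsOuter, hSouter] at hwS
      rcases hTo : T.outer with _ | ow
      · rw [hTo] at hwS; simp at hwS
      · rw [hTo] at hwS
        simp only [Option.map_some, Option.some.injEq] at hwS
        subst hwS
        rw [kf1, s.outer_spec ow hTo, hwT]
  choose ΦT hΦT using mkT
  choose Φ0 hΦ0 using mkT0
  choose Ψ hΨ1 hΨ2 using mkInv
  have hΦ0' : ∀ (σ : S.State) (p : {w : T0.White // w ≠ o0}),
      σ.toFun (eW (Sum.inr p)) = θ ((Φ0 σ).toFun p.1) := fun σ p => hΦ0 σ p.1 p.2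
  have hLI : ∀ σ : S.State, Ψ (ΦT σ) (Φ0 σ) = σ := by
    intro σ
    apply Trinity.State.ext'
    intro wS
    rcases hx : eW.symm wS with w | p
    · obtain rfl : wS = eW (Sum.inl w) := by rw [← hx, Equiv.apply_symm_apply]
      rw [hΨ1, hΦT]
    · obtain rfl : wS = eW (Sum.inr p) := by rw [← hx, Equiv.apply_symm_apply]
      exact (hΨ2 (ΦT σ) (Φ0 σ) p.1 p.2).trans (hΦ0 σ p.1 p.2).symm
  have hRI1 : ∀ (s : T.State) (s' : T0.State), ΦT (Ψ s s') = s := by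
    intro s s'
    apply Trinity.State.ext'
    intro w
    have h1 := hΦT (Ψ s s') w
    rw [hΨ1] at h1
    simpa using (eV.injective h1).symm
  have hRI2 : ∀ (s : T.State) (s' : T0.State), Φ0 (Ψ s s') = s' := by
    intro s s'
    apply Trinity.State.ext'
    intro w
    by_cases h : w = o0
    · subst h
      rw [(Φ0 (Ψ s s')).outer_spec _ hIsOuterO0, s'.outer_spec _ hIsOuterO0]
    · apply θinj
      rw [← hΦ0 (Ψ s s') w h]
      exact hΨ2 s s' w h
  refine ⟨⟨fun σ => (ΦT σ, Φ0 σ), fun p => Ψ p.1 p.2, hLI, fun p => ?_⟩, ?_, ?_, ?_⟩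
  · show (ΦT (Ψ p.1 p.2), Φ0 (Ψ p.1 p.2)) = p
    rw [hRI1, hRI2]
  · exact fun σ w => hΦT σ w
  · exact fun σ w h => hΦ0 σ w h
  · intro σ τ
    show S.CWMove σ τ ↔
      ((Φ0 σ = Φ0 τ ∧ T.CWMove (ΦT σ) (ΦT τ)) ∨ (ΦT σ = ΦT τ ∧ T0.CWMove (Φ0 σ) (Φ0 τ)))
    constructor
    · rintro ⟨W, u, hcfg, hnout, hσv, hτv, hrest⟩
      have hC1 : ∀ c : Fin 3, (∃ p, W c = eW (Sum.inr p)) →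
          ∃ p, W (c + 2) = eW (Sum.inr p) := by
        rintro c ⟨p, hp⟩
        have hnr : ¬ T0.IsRoot ((Φ0 σ).toFun p.1) :=
          (Φ0 σ).not_root p.1 (hNOuter0 p.1 p.2)
        have h2 : u (c + 1) = eV (Sum.inr ⟨_, hnr⟩) := by
          rw [← hσv c, hp, hΦ0' σ p, hθ _ hnr]
        rcases hx : eW.symm (W (c + 2)) with w1 | q
        · exfalso
          have hW : W (c + 2) = eW (Sum.inl w1) := by rw [← hx, Equiv.apply_symm_apply]
          have h3 := hcfg (c + 2) (c + 1) (fin3C c)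
          rw [hW, hwT, h2] at h3
          exact absurd (eV.injective h3) (by simp)
        · exact ⟨q, by rw [← hx, Equiv.apply_symm_apply]⟩
      rcases h0 : eW.symm (W 0) with w0 | p0
      · -- the configuration lies in T
        have hW0 : W 0 = eW (Sum.inl w0) := by rw [← h0, Equiv.apply_symm_apply]
        have hnone : ∀ c : Fin 3, ¬ ∃ p, W c = eW (Sum.inr p) := by
          intro c hc
          have h1 := hC1 c hc
          have h2 := hC1 _ h1
          have hcases := (by decide :
            ∀ c : Fin 3, (0 : Fin 3) = c ∨ (0 : Fin 3) = c + 2 ∨ (0 : Fin 3) = c + 2 + 2) c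
          obtain ⟨p, hp⟩ : ∃ p, W 0 = eW (Sum.inr p) := by
            rcases hcases with h | h | h
            · rw [h]; exact hc
            · rw [h]; exact h1
            · rw [h]; exact h2
          rw [hW0] at hp
          exact absurd (eW.injective hp) (by simp)
        have hall : ∀ c : Fin 3, ∃ w', W c = eW (Sum.inl w') := by
          intro c
          rcases hx : eW.symm (W c) with w | p
          · exact ⟨w, by rw [← hx, Equiv.apply_symm_apply]⟩
          · exact absurd ⟨p, by rw [← hx, Equiv.apply_symm_apply]⟩ (hnone c)
        choose V hV using hall
        refine Or.inl ⟨?_, ?_⟩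
        · apply Trinity.State.ext'
          intro w
          by_cases hw : w = o0
          · subst hw
            rw [(Φ0 σ).outer_spec _ hIsOuterO0, (Φ0 τ).outer_spec _ hIsOuterO0]
          · have hne : ∀ c, eW (Sum.inr (⟨w, hw⟩ : {w : T0.White // w ≠ o0})) ≠ W c := by
              intro c h
              rw [hV c] at h
              exact absurd (eW.injective h) (by simp)
            have h3 := hrest _ hne
            apply θinj
            rw [← hΦ0 σ w hw, ← hΦ0 τ w hw, h3]
        · refine ⟨V, fun c => T.wvert (V (c + 1)) c, ?_, ?_, ?_, ?_, ?_⟩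
          · intro c c' hcc
            have e1 := hcfg c c' hcc
            have e2 := hcfg (c' + 1) c' (fin3A c')
            rw [hV c, hwT] at e1
            rw [hV (c' + 1), hwT] at e2
            simpa using eV.injective (e1.trans e2.symm)
          · intro c h
            exact hnout c (by rw [hV c]; exact (hOuterS_inl (V c)).mpr h)
          · intro c
            have e1 := hσv c
            rw [hV c, hΦT σ (V c)] at e1
            have e2 := hcfg (c + 2) (c + 1) (fin3C c)
            rw [hV (c + 2), hwT] at e2
            have h3 := eV.injective (e1.trans e2.symm)
            simp only [Sum.inl.injEq] at h3
            dsimp only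
            rw [fin3H c]
            exact h3
          · intro c
            have e1 := hτv c
            rw [hV c, hΦT τ (V c)] at e1
            have e2 := hcfg c (c + 2) (fin3E c)
            rw [hV c, hwT] at e2
            have h3 := eV.injective (e1.trans e2.symm)
            simp only [Sum.inl.injEq] at h3
            dsimp only
            rw [fin3G c]
            exact h3
          · intro w hw
            have hne : ∀ c, eW (Sum.inl w) ≠ W c := by
              intro c h
              rw [hV c] at h
              exact hw c (by simpa using eW.injective h)
            have h1 := hrest _ hne
            rw [hΦT σ w, hΦT τ w] at h1
            simpa using eV.injective h1
      · -- the configuration lies in T0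
        have hW0 : W 0 = eW (Sum.inr p0) := by rw [← h0, Equiv.apply_symm_apply]
        have h1 := hC1 0 ⟨p0, hW0⟩
        have h2 := hC1 _ h1
        have hall : ∀ c : Fin 3, ∃ p, W c = eW (Sum.inr p) := by
          intro c
          have hcases := (by decide :
            ∀ c : Fin 3, c = 0 ∨ c = (0 : Fin 3) + 2 ∨ c = (0 : Fin 3) + 2 + 2) c
          rcases hcases with h | h | h
          · rw [h]; exact ⟨p0, hW0⟩
          · rw [h]; exact h1
          · rw [h]; exact h2
        choose V hV using hall
        refine Or.inr ⟨?_, ?_⟩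
        · apply Trinity.State.ext'
          intro w
          have hne : ∀ c, eW (Sum.inl w) ≠ W c := by
            intro c h
            rw [hV c] at h
            exact absurd (eW.injective h) (by simp)
          have h3 := hrest _ hne
          rw [hΦT σ w, hΦT τ w] at h3
          simpa using (eV.injective h3).symm
        · refine ⟨fun c => (V c).1, fun c => T0.wvert (V (c + 1)).1 c, ?_, ?_, ?_, ?_, ?_⟩
          · intro c c' hcc
            have e1 := hcfg c c' hcc
            have e2 := hcfg (c' + 1) c' (fin3A c')
            rw [hV c, hw0' (V c)] at e1
            rw [hV (c' + 1), hw0' (V (c' + 1))] at e2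
            exact θinj (e1.trans e2.symm)
          · exact fun c => hNOuter0 (V c).1 (V c).2
          · intro c
            have e1 := hσv c
            rw [hV c, hΦ0' σ (V c)] at e1
            have e2 := hcfg (c + 2) (c + 1) (fin3C c)
            rw [hV (c + 2), hw0' (V (c + 2))] at e2
            have h3 := θinj (e1.trans e2.symm)
            dsimp only
            rw [fin3H c]
            exact h3
          · intro c
            have e1 := hτv c
            rw [hV c, hΦ0' τ (V c)] at e1
            have e2 := hcfg c (c + 2) (fin3E c)
            rw [hV c, hw0' (V c)] at e2
            have h3 := θinj (e1.trans e2.symm)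
            dsimp only
            rw [fin3G c]
            exact h3
          · intro w hw
            by_cases hwo : w = o0
            · subst hwo
              rw [(Φ0 σ).outer_spec _ hIsOuterO0, (Φ0 τ).outer_spec _ hIsOuterO0]
            · have hne : ∀ c, eW (Sum.inr (⟨w, hwo⟩ : {w : T0.White // w ≠ o0})) ≠ W c := by
                intro c h
                rw [hV c] at h
                have h4 := eW.injective h
                simp only [Sum.inr.injEq] at h4
                exact hw c (congrArg Subtype.val h4)
              have h3 := hrest _ hne
              apply θinj
              rw [← hΦ0 τ w hwo, ← hΦ0 σ w hwo, h3]
    · rintro (⟨h2eq, V, uu, hcfg, hnout, hsv, htv, hrest⟩ |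
        ⟨h1eq, V, uu, hcfg, hnout, hsv, htv, hrest⟩)
      · refine ⟨fun c => eW (Sum.inl (V c)), fun c => eV (Sum.inl (uu c)), ?_, ?_, ?_, ?_, ?_⟩
        · intro c c' h
          rw [hwT, hcfg c c' h]
        · intro c h
          exact hnout c ((hOuterS_inl (V c)).mp h)
        · intro c
          rw [hΦT σ (V c), hsv c]
        · intro c
          rw [hΦT τ (V c), htv c]
        · intro wS hwS
          rcases hx : eW.symm wS with w | p
          · obtain rfl : wS = eW (Sum.inl w) := by rw [← hx, Equiv.apply_symm_apply]
            have hwc : ∀ c, w ≠ V c := by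
              intro c h
              exact hwS c (by rw [h])
            rw [hΦT σ w, hΦT τ w, hrest w hwc]
          · obtain rfl : wS = eW (Sum.inr p) := by rw [← hx, Equiv.apply_symm_apply]
            rw [hΦ0' σ p, hΦ0' τ p, h2eq]
      · have hVne : ∀ c, V c ≠ o0 := fun c e => hnout c ((hOuter0 (V c)).mpr e)
        refine ⟨fun c => eW (Sum.inr ⟨V c, hVne c⟩), fun c => θ (uu c), ?_, ?_, ?_, ?_, ?_⟩
        · intro c c' h
          rw [hw0 (V c) (hVne c), hcfg c c' h]
        · exact fun c => hOuterS_inr _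
        · intro c
          rw [hΦ0 σ (V c) (hVne c), hsv c]
        · intro c
          rw [hΦ0 τ (V c) (hVne c), htv c]
        · intro wS hwS
          rcases hx : eW.symm wS with w | p
          · obtain rfl : wS = eW (Sum.inl w) := by rw [← hx, Equiv.apply_symm_apply]
            rw [hΦT σ w, hΦT τ w, h1eq]
          · obtain rfl : wS = eW (Sum.inr p) := by rw [← hx, Equiv.apply_symm_apply]
            have hwc : ∀ c, p.1 ≠ V c := by
              intro c h
              exact hwS c (by rw [show p = ⟨V c, hVne c⟩ from Subtype.ext h])
            rw [hΦ0' σ p, hΦ0' τ p, hrest p.1 hwc]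
end

section
/- In any state of a planar or toric trinity, two clockwise empty black triangles cannot share a vertex; likewise, two counter-clockwise empty black triangles cannot share a vertex. -/
/-- Lemma 2.5.  In any state of a planar or toric trinity,
two clockwise empty black triangles cannot share a vertex; likewise, two
counter-clockwise empty black triangles cannot share a vertex. -/
theorem clockwise_empty_black_triangles_do_not_share_vertices
    (T : Trinity) (hpt : T.Planar ∨ T.Toric) (s : T.State)
    (b b' : T.Black) (hne : b ≠ b') :
    (s.IsCW b → s.IsCW b' → ∀ c c' : Fin 3, T.bvert b c ≠ T.bvert b' c') ∧
    (s.IsCCW b → s.IsCCW b' → ∀ c c' : Fin 3, T.bvert b c ≠ T.bvert b' c') := by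
  -- The matching function of a state is injective on all white triangles.
  have hinj : ∀ w w' : T.White, s.toFun w = s.toFun w' → w = w' := by
    intro w w' h
    by_cases hw : T.IsOuter w <;> by_cases hw' : T.IsOuter w'
    · exact Option.some_injective _ (hw.symm.trans hw')
    · exact absurd ⟨w, hw, 0, h.symm.trans (s.outer_spec w hw)⟩ (s.not_root w' hw')
    · exact absurd ⟨w', hw', 0, h.trans (s.outer_spec w' hw')⟩ (s.not_root w hw)
    · exact s.injOn w w' hw hw' h
  have key : ∀ d : Fin 3, (∀ c, s.toFun (T.badj b c) = T.bvert b (c + d)) →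
      (∀ c, s.toFun (T.badj b' c) = T.bvert b' (c + d)) →
      ∀ c c' : Fin 3, T.bvert b c ≠ T.bvert b' c' := by
    intro d hb hb' c c' hv
    have hcc : c = c' := by
      have := congrArg T.vcol hv
      rwa [T.bvert_col, T.bvert_col] at this
    subst hcc
    have h1 : s.toFun (T.badj b (c - d)) = T.bvert b c := by rw [hb, sub_add_cancel]
    have h2 : s.toFun (T.badj b' (c - d)) = T.bvert b' c := by rw [hb', sub_add_cancel]
    have := hinj _ _ (h1.trans (hv.trans h2.symm))
    have hb2 : b = b' := by
      have := congrArg (fun w => T.wadj w (c - d)) this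
      simpa [T.wadj_badj] using this
    exact hne hb2
  exact ⟨fun h h' => key 1 h.2 h'.2, fun h h' => key 2 h.2 h'.2⟩
end

section
/- Suppose a path in the state transition graph of a planar or toric trinity contains a clockwise (counter-clockwise) move performed immediately after a counter-clockwise (clockwise) move. Then the order of these two moves can be swapped without changing any other states or moves along the path; in particular, the starting and ending states of the path remain the same. -/
namespace Trinity

variable {T : Trinity}

private lemma fin3_add_ne {k δ : Fin 3} (hδ : δ ≠ 0) : k + δ ≠ k := by
  intro h
  apply hδ
  have h' : k + δ = k + 0 := by rwa [add_zero]
  exact add_left_cancel h'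

private lemma bvert_inj {b : T.Black} {k k' : Fin 3} (h : T.bvert b k = T.bvert b k') :
    k = k' := by
  have h2 := congrArg T.vcol h
  rwa [T.bvert_col, T.bvert_col] at h2

private lemma wvert_inj {w : T.White} {k k' : Fin 3} (h : T.wvert w k = T.wvert w k') :
    k = k' := by
  have h2 := congrArg T.vcol h
  rwa [T.wvert_col, T.wvert_col] at h2

private lemma bvert_eq_wvert (b : T.Black) {c k : Fin 3} (h : k ≠ c) :
    T.bvert b k = T.wvert (T.badj b c) k := by
  conv_lhs => rw [← T.wadj_badj b c]
  rw [T.bvert_wadj _ _ _ h]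

/-- A state matching the three whites around `b` in a rotational pattern has no
arrow through `b`. -/
private lemma emptyAt_of_pat {s : T.State} {b : T.Black} {δ : Fin 3} (hδ : δ ≠ 0)
    (hpat : ∀ c, s.toFun (T.badj b c) = T.bvert b (c + δ)) : s.EmptyAt b := by
  intro w _ harr
  have hw : w = T.badj b (T.vcol (s.toFun w)) := by
    rw [← harr]; exact (T.badj_wadj w _).symm
  have h1 : s.toFun w = T.bvert b (T.vcol (s.toFun w) + δ) := by
    conv_lhs => rw [hw]
    rw [hpat]
  have h2 : T.vcol (s.toFun w) = T.vcol (s.toFun w) + δ := by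
    conv_lhs => rw [h1]
    rw [T.bvert_col]
  exact fin3_add_ne hδ h2.symm

/-- If the outer triangle is adjacent to `b` and a state matches it in a
rotational pattern `+δ` around `b`, then the outer triangle is
`badj b (-δ)`. -/
private lemma outer_col {s : T.State} {b : T.Black} {δ c : Fin 3}
    (hpat : ∀ c, s.toFun (T.badj b c) = T.bvert b (c + δ)) (hδ : δ ≠ 0)
    (ho : T.IsOuter (T.badj b c)) : c + δ = 0 := by
  have h1 := s.outer_spec _ ho
  rw [hpat c, bvert_eq_wvert b (fin3_add_ne hδ)] at h1
  exact wvert_inj h1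

/-- Rotating the matching around a black triangle `b` (whose neighbors are
non-outer) from the pattern `+δ` to the pattern `+δ'` yields a valid state. -/
private lemma exists_shift (s : T.State) (b : T.Black) (δ δ' : Fin 3)
    (hδ : δ ≠ 0) (hδ' : δ' ≠ 0)
    (hout : ∀ c, ¬ T.IsOuter (T.badj b c))
    (hpat : ∀ c, s.toFun (T.badj b c) = T.bvert b (c + δ)) :
    ∃ w : T.State, (∀ c, w.toFun (T.badj b c) = T.bvert b (c + δ')) ∧
      ∀ x, (∀ c, x ≠ T.badj b c) → w.toFun x = s.toFun x := by
  classical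
  have hbinj : ∀ {c c' : Fin 3}, T.badj b c = T.badj b c' → c = c' := by
    intro c c' h
    have h1 : T.bvert b (c + δ) = T.bvert b (c' + δ) := by rw [← hpat c, h, hpat c']
    exact add_right_cancel (bvert_inj h1)
  set f : T.White → T.Vertex := fun x =>
    if h : ∃ c, x = T.badj b c then T.bvert b (h.choose + δ') else s.toFun x with hf
  have hfb : ∀ c, f (T.badj b c) = T.bvert b (c + δ') := by
    intro c
    have hex : ∃ c', T.badj b c = T.badj b c' := ⟨c, rfl⟩
    simp only [hf, dif_pos hex]
    congr 2
    exact (hbinj hex.choose_spec).symm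
  have hfo : ∀ x, (∀ c, x ≠ T.badj b c) → f x = s.toFun x := by
    intro x hx
    have hnex : ¬ ∃ c, x = T.badj b c := by rintro ⟨c, hc⟩; exact hx c hc
    simp only [hf, dif_neg hnex]
  have hA : ∀ x : T.White, ¬ T.IsOuter x → (∀ c, x ≠ T.badj b c) →
      ∀ k, s.toFun x ≠ T.bvert b k := by
    intro x hxo hx k hk
    have h1 : s.toFun (T.badj b (k - δ)) = T.bvert b k := by
      rw [hpat]; congr 1; abel
    have h2 := s.injOn x (T.badj b (k - δ)) hxo (hout _) (by rw [hk, h1])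
    exact hx _ h2
  refine ⟨⟨f, ?_, ?_, ?_, ?_, ?_⟩, hfb, hfo⟩
  · intro x
    by_cases hx : ∃ c, x = T.badj b c
    · obtain ⟨c, rfl⟩ := hx
      exact ⟨c + δ', by rw [hfb c, bvert_eq_wvert b (fin3_add_ne hδ')]⟩
    · have hx' : ∀ c, x ≠ T.badj b c := fun c hc => hx ⟨c, hc⟩
      obtain ⟨c, hc⟩ := s.incident x
      exact ⟨c, by rw [hfo x hx', hc]⟩
  · intro x x' hxo hx'o hxx
    by_cases hx : ∃ c, x = T.badj b c <;> by_cases hx' : ∃ c, x' = T.badj b c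
    · obtain ⟨c, rfl⟩ := hx; obtain ⟨c', rfl⟩ := hx'
      rw [hfb, hfb] at hxx
      rw [add_right_cancel (bvert_inj hxx)]
    · obtain ⟨c, rfl⟩ := hx
      have hx'' : ∀ c, x' ≠ T.badj b c := fun c hc => hx' ⟨c, hc⟩
      rw [hfb, hfo x' hx''] at hxx
      exact absurd hxx.symm (hA x' hx'o hx'' _)
    · obtain ⟨c, rfl⟩ := hx'
      have hx'' : ∀ c, x ≠ T.badj b c := fun c hc => hx ⟨c, hc⟩
      rw [hfb, hfo x hx''] at hxx
      exact absurd hxx (hA x hxo hx'' _)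
    · have hx1 : ∀ c, x ≠ T.badj b c := fun c hc => hx ⟨c, hc⟩
      have hx2 : ∀ c, x' ≠ T.badj b c := fun c hc => hx' ⟨c, hc⟩
      rw [hfo x hx1, hfo x' hx2] at hxx
      exact s.injOn x x' hxo hx'o hxx
  · intro x hxo
    by_cases hx : ∃ c, x = T.badj b c
    · obtain ⟨c, rfl⟩ := hx
      have h1 : T.bvert b (c + δ') = s.toFun (T.badj b (c + δ' - δ)) := by
        rw [hpat]; congr 1; abel
      rw [hfb, h1]
      exact s.not_root _ (hout _)
    · rw [hfo x (fun c hc => hx ⟨c, hc⟩)]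
      exact s.not_root x hxo
  · intro v hv
    obtain ⟨x, hxo, hxv⟩ := s.surj v hv
    by_cases hx : ∃ c, x = T.badj b c
    · obtain ⟨c, rfl⟩ := hx
      refine ⟨T.badj b (c + δ - δ'), hout _, ?_⟩
      rw [hfb, ← hxv, hpat]
      congr 1; abel
    · exact ⟨x, hxo, by rw [hfo x (fun c hc => hx ⟨c, hc⟩)]; exact hxv⟩
  · intro x hxo
    rw [hfo x (fun c hc => hout c (hc ▸ hxo))]
    exact s.outer_spec x hxo

/-- Core of Lemma 2.7, cw-then-ccw case: if `s →cw(b₁)→ u` and `v →cw(b₂)→ u`,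
then there is `w` with `w →cw(b₂)→ s` and `w →cw(b₁)→ v`. -/
private lemma core1 {s u v : T.State} {b₁ b₂ : T.Black} (hne : b₁ ≠ b₂)
    (m₁ : T.CWMoveAt s u b₁) (m₂ : T.CWMoveAt v u b₂) :
    ∃ w, T.CWMoveAt w s b₂ ∧ T.CWMoveAt w v b₁ := by
  obtain ⟨⟨_, hcw₁⟩, hu₁, hoff₁⟩ := m₁
  obtain ⟨⟨_, hcw₂⟩, hu₂, hoff₂⟩ := m₂
  have disj : ∀ c c', T.badj b₁ c ≠ T.badj b₂ c' := by
    intro c c' h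
    have h1 : T.bvert b₁ (c + 2) = T.bvert b₂ (c' + 2) := by
      rw [← hu₁ c, h, hu₂ c']
    have h2 : c + 2 = c' + 2 := by
      have := congrArg T.vcol h1
      rwa [T.bvert_col, T.bvert_col] at this
    have h3 : c = c' := add_right_cancel h2
    apply hne
    rw [← T.wadj_badj b₁ c, h, h3, T.wadj_badj]
  have hout₂ : ∀ c, ¬ T.IsOuter (T.badj b₂ c) := by
    intro c ho
    have e1 : c + 1 = 0 := outer_col hcw₂ (by decide) ho
    have e2 : c + 2 = 0 := outer_col hu₂ (by decide) ho
    rw [← e1] at e2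
    exact absurd (add_left_cancel e2) (by decide)
  have spat : ∀ c, s.toFun (T.badj b₂ c) = T.bvert b₂ (c + 2) := by
    intro c
    rw [← hoff₁ _ (fun c' h => (disj c' c h.symm)), hu₂]
  obtain ⟨w, wpat, woff⟩ := exists_shift s b₂ 2 1 (by decide) (by decide) hout₂ spat
  refine ⟨w, ⟨⟨emptyAt_of_pat (by decide) wpat, wpat⟩, spat,
      fun x hx => (woff x hx).symm⟩, ?_⟩
  have wpat₁ : ∀ c, w.toFun (T.badj b₁ c) = T.bvert b₁ (c + 1) := by
    intro c
    rw [woff _ (fun c' => disj c c'), hcw₁]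
  refine ⟨⟨emptyAt_of_pat (by decide) wpat₁, wpat₁⟩, ?_, ?_⟩
  · intro c
    rw [← hoff₂ _ (fun c' => disj c c'), hu₁]
  · intro x hx
    by_cases hx2 : ∃ c, x = T.badj b₂ c
    · obtain ⟨c, rfl⟩ := hx2
      rw [hcw₂, wpat]
    · have hx2' : ∀ c, x ≠ T.badj b₂ c := fun c hc => hx2 ⟨c, hc⟩
      rw [← hoff₂ x hx2', hoff₁ x hx, woff x hx2']

/-- Core of Lemma 2.7, ccw-then-cw case: if `u →cw(b₁)→ s` and `u →cw(b₂)→ v`,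
then there is `w` with `s →cw(b₂)→ w` and `v →cw(b₁)→ w`. -/
private lemma core2 {s u v : T.State} {b₁ b₂ : T.Black} (hne : b₁ ≠ b₂)
    (m₁ : T.CWMoveAt u s b₁) (m₂ : T.CWMoveAt u v b₂) :
    ∃ w, T.CWMoveAt s w b₂ ∧ T.CWMoveAt v w b₁ := by
  obtain ⟨⟨_, hcw₁⟩, hs₁, hoff₁⟩ := m₁
  obtain ⟨⟨_, hcw₂⟩, hv₂, hoff₂⟩ := m₂
  have disj : ∀ c c', T.badj b₁ c ≠ T.badj b₂ c' := by
    intro c c' h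
    have h1 : T.bvert b₁ (c + 1) = T.bvert b₂ (c' + 1) := by
      rw [← hcw₁ c, h, hcw₂ c']
    have h2 : c + 1 = c' + 1 := by
      have := congrArg T.vcol h1
      rwa [T.bvert_col, T.bvert_col] at this
    have h3 : c = c' := add_right_cancel h2
    apply hne
    rw [← T.wadj_badj b₁ c, h, h3, T.wadj_badj]
  have hout₂ : ∀ c, ¬ T.IsOuter (T.badj b₂ c) := by
    intro c ho
    have e1 : c + 1 = 0 := outer_col hcw₂ (by decide) ho
    have e2 : c + 2 = 0 := outer_col hv₂ (by decide) ho
    rw [← e1] at e2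
    exact absurd (add_left_cancel e2) (by decide)
  have spat : ∀ c, s.toFun (T.badj b₂ c) = T.bvert b₂ (c + 1) := by
    intro c
    rw [hoff₁ _ (fun c' h => (disj c' c h.symm)), hcw₂]
  obtain ⟨w, wpat, woff⟩ := exists_shift s b₂ 1 2 (by decide) (by decide) hout₂ spat
  refine ⟨w, ⟨⟨emptyAt_of_pat (by decide) spat, spat⟩, wpat, woff⟩, ?_⟩
  have vpat₁ : ∀ c, v.toFun (T.badj b₁ c) = T.bvert b₁ (c + 1) := by
    intro c
    rw [hoff₂ _ (fun c' => disj c c'), hcw₁]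
  refine ⟨⟨emptyAt_of_pat (by decide) vpat₁, vpat₁⟩, ?_, ?_⟩
  · intro c
    rw [woff _ (fun c' => disj c c'), hs₁]
  · intro x hx
    by_cases hx2 : ∃ c, x = T.badj b₂ c
    · obtain ⟨c, rfl⟩ := hx2
      rw [wpat, hv₂]
    · have hx2' : ∀ c, x ≠ T.badj b₂ c := fun c hc => hx2 ⟨c, hc⟩
      rw [woff x hx2', hoff₁ x hx, hoff₂ x hx2']

end Trinity

/-- Lemma 2.7.  Suppose a path in the state transition graph
of a planar or toric trinity contains a clockwise (counter-clockwise) move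
performed immediately after a counter-clockwise (clockwise) move (the two moves
being about distinct black triangles; `d = true` stands for clockwise).  Then
the order of these two moves can be swapped without changing any other states
or moves along the path; in particular, the starting and ending states of the
path remain the same. -/
theorem swap_adjacent_opposite_moves
    (T : Trinity) (hpt : T.Planar ∨ T.Toric) (s t : T.State)
    (l₁ l₂ : List (T.Black × Bool)) (b₁ b₂ : T.Black) (d : Bool) (hne : b₁ ≠ b₂)
    (h : T.Walk s (l₁ ++ (b₁, d) :: (b₂, !d) :: l₂) t) :
    T.Walk s (l₁ ++ (b₂, !d) :: (b₁, d) :: l₂) t := by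
  induction l₁ generalizing s with
  | nil =>
    simp only [List.nil_append, Bool.not_true, Bool.not_false] at h ⊢
    cases d with
    | false =>
      cases h with
      | ccw m₁ h' =>
        cases h' with
        | cw m₂ h'' =>
          obtain ⟨w, w₂, w₁⟩ := Trinity.core2 hne m₁ m₂
          exact Trinity.Walk.cw w₂ (Trinity.Walk.ccw w₁ h'')
    | true =>
      cases h with
      | cw m₁ h' =>
        cases h' with
        | ccw m₂ h'' =>
          obtain ⟨w, w₂, w₁⟩ := Trinity.core1 hne m₁ m₂
          exact Trinity.Walk.ccw w₂ (Trinity.Walk.cw w₁ h'')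
  | cons p l₁ ih =>
    cases h with
    | cw m h' => exact Trinity.Walk.cw m (ih _ h')
    | ccw m h' => exact Trinity.Walk.ccw m (ih _ h')
end

section
/- When a given starting state of a planar or toric trinity is changed through a series of clockwise and counter-clockwise clock moves, the same ending state results as long as the same moves, with the same algebraic multiplicities on each black triangle, are performed in any allowable order. -/
/-! ### Auxiliary lemmas for Lemma 3.1 -/

namespace ClockAux

/-- The contribution of one move (at black triangle `p.1`, in direction `p.2`)
to the color of the match of the white triangle `w`. -/
def gfun (T : Trinity) (w : T.White) (p : T.Black × Bool) : Fin 3 :=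
  if ∃ c, T.wadj w c = p.1 then (if p.2 then 1 else -1) else 0

/-- Total color shift of `w` along a list of moves. -/
def Sfun (T : Trinity) (w : T.White) (l : List (T.Black × Bool)) : Fin 3 :=
  (l.map (gfun T w)).sum

lemma gfun_false (T : Trinity) (w : T.White) (b : T.Black) :
    gfun T w (b, false) = - gfun T w (b, true) := by
  unfold gfun; split <;> simp

open scoped Fin.CommRing in
lemma step_vcol {T : Trinity} {s t : T.State} {b : T.Black} (h : T.CWMoveAt s t b)
    (w : T.White) :
    T.vcol (t.toFun w) = T.vcol (s.toFun w) + gfun T w (b, true) := by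
  obtain ⟨⟨_, hcw⟩, hnew, hkeep⟩ := h
  unfold gfun
  by_cases hex : ∃ c, T.wadj w c = b
  · obtain ⟨c, hc⟩ := hex
    have hw : T.badj b c = w := by rw [← hc, T.badj_wadj]
    have h1 : s.toFun w = T.bvert b (c + 1) := by rw [← hw]; exact hcw c
    have h2 : t.toFun w = T.bvert b (c + 2) := by rw [← hw]; exact hnew c
    rw [h1, h2, T.bvert_col, T.bvert_col, if_pos ⟨c, hc⟩]
    simp only [if_true]
    ring
  · have hne : ∀ c, w ≠ T.badj b c := by
      intro c hcontra
      exact hex ⟨c, by rw [hcontra, T.wadj_badj]⟩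
    rw [hkeep w hne, if_neg hex, add_zero]

open scoped Fin.CommRing in
lemma walk_vcol {T : Trinity} {s t : T.State} {l : List (T.Black × Bool)}
    (h : T.Walk s l t) (w : T.White) :
    T.vcol (t.toFun w) = T.vcol (s.toFun w) + Sfun T w l := by
  induction h with
  | nil s => simp [Sfun]
  | cw hmv _ ih =>
    rw [ih, step_vcol hmv w]
    simp [Sfun, add_assoc]
  | ccw hmv _ ih =>
    have hs := step_vcol hmv w
    rw [ih]
    simp only [Sfun, List.map_cons, List.sum_cons, gfun_false]
    linear_combination -hs

lemma Sfun_count {T : Trinity} (w : T.White) (l : List (T.Black × Bool)) :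
    Sfun T w l = ∑ p : T.Black × Bool, l.count p • gfun T w p := by
  induction l with
  | nil => simp [Sfun]
  | cons p l ih =>
    have hcnt : ∀ q : T.Black × Bool, List.count q (p :: l) =
        List.count q l + (if q = p then 1 else 0) := by
      intro q
      rw [List.count_cons]
      congr 1
      simp only [beq_iff_eq]
      exact if_congr eq_comm rfl rfl
    simp only [Sfun, List.map_cons, List.sum_cons] at ih ⊢
    rw [ih]
    simp only [hcnt, add_smul, Finset.sum_add_distrib]
    rw [add_comm]
    congr 1
    have : ∀ q ∈ (Finset.univ : Finset (T.Black × Bool)),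
        (if q = p then 1 else 0 : ℕ) • gfun T w q =
        if q = p then gfun T w p else 0 := by
      intro q _
      split
      · next h => rw [h, one_smul]
      · rw [zero_smul]
    rw [Finset.sum_congr rfl this, Finset.sum_ite_eq' Finset.univ p (fun _ => gfun T w p),
      if_pos (Finset.mem_univ p)]

open scoped Fin.CommRing in
lemma smul_helper (x : Fin 3) (a b c d : ℕ) (h : (a : ℤ) - b = (c : ℤ) - d) :
    a • x + b • (-x) = c • x + d • (-x) := by
  have h3 : ((a : ℤ) - b : ℤ) = ((c : ℤ) - d : ℤ) := h
  have h4 : ((a : ℤ) : Fin 3) - ((b : ℤ) : Fin 3) = ((c : ℤ) : Fin 3) - ((d : ℤ) : Fin 3) := by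
    have := congrArg (fun z : ℤ => (z : Fin 3)) h3
    push_cast at this ⊢
    exact this
  push_cast at h4
  simp only [nsmul_eq_mul]
  linear_combination x * h4

end ClockAux

/-- Lemma 3.1.  When a given starting state of a planar or
toric trinity is changed through a series of clockwise and counter-clockwise
clock moves, the same ending state results as long as the same moves, with the
same algebraic multiplicities on each black triangle, are performed in any
allowable order. -/
theorem walks_with_equal_multiplicities_have_equal_endpoints
    (T : Trinity) (hpt : T.Planar ∨ T.Toric) (s t₁ t₂ : T.State)
    (l₁ l₂ : List (T.Black × Bool)) (h₁ : T.Walk s l₁ t₁) (h₂ : T.Walk s l₂ t₂)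
    (hmult : ∀ b : T.Black,
      (l₁.count (b, true) : ℤ) - (l₁.count (b, false) : ℤ) =
      (l₂.count (b, true) : ℤ) - (l₂.count (b, false) : ℤ)) :
    t₁ = t₂ := by
  have key : ∀ w, T.vcol (t₁.toFun w) = T.vcol (t₂.toFun w) := by
    intro w
    rw [ClockAux.walk_vcol h₁ w, ClockAux.walk_vcol h₂ w,
      ClockAux.Sfun_count, ClockAux.Sfun_count]
    congr 1
    rw [Fintype.sum_prod_type, Fintype.sum_prod_type]
    refine Finset.sum_congr rfl (fun b _ => ?_)
    rw [Fintype.sum_bool, Fintype.sum_bool, ClockAux.gfun_false]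
    exact ClockAux.smul_helper _ _ _ _ _ (hmult b)
  have hfun : t₁.toFun = t₂.toFun := by
    funext w
    obtain ⟨c₁, hc₁⟩ := t₁.incident w
    obtain ⟨c₂, hc₂⟩ := t₂.incident w
    have := key w
    rw [hc₁, hc₂, T.wvert_col, T.wvert_col] at this
    rw [hc₁, hc₂, this]
  cases t₁; cases t₂
  cases hfun
  rfl
end
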